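/- Let f_M(x₁,x₂,x₃) = x₃⁶ + x₁²x₂⁴ + x₁⁴x₂² − 3x₁²x₂²x₃², f_0(x₁,x₂,x₃,x₄) = f_M(x₁,x₂,x₃), and f_1(x₁,x₂,x₃,x₄) = x₁⁶ + x₂⁶ + x₃⁶ − x₄⁶. Then (a) there is no x ∈ ℝ⁴ with f_0(x) < 0 and f_1(x) < 0, and (b) there are no λ_0, λ_1 ≥ 0 with λ_0 + λ_1 = 1 such that λ_0 f_0 + λ_1 f_1 is a sum of squares of polynomials. -/

import Mathlib

open Finset MvPolynomial

noncomputable section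

/-- Entrywise inner product of two m-th order n-dimensional tensors. -/
def tIP {m n : ℕ} (A B : (Fin m → Fin n) → ℝ) : ℝ :=
  ∑ i : Fin m → Fin n, A i * B i

/-- The rank-one tensor `x^{⊗m}` with entries `x_{i_1} ⋯ x_{i_m}`. -/
def rk1 {n : ℕ} (m : ℕ) (x : Fin n → ℝ) : (Fin m → Fin n) → ℝ :=
  fun i => ∏ k, x (i k)

/-- A tensor is symmetric if invariant under permutations of its indices. -/
def TSymm {m n : ℕ} (A : (Fin m → Fin n) → ℝ) : Prop :=
  ∀ (σ : Equiv.Perm (Fin m)) (i : Fin m → Fin n), A (i ∘ σ) = A i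

/-- Essentially nonpositive: entries with indices not all equal are ≤ 0. -/
def EssNonpos {m n : ℕ} (A : (Fin m → Fin n) → ℝ) : Prop :=
  ∀ i : Fin m → Fin n, (¬ ∀ k l, i k = i l) → A i ≤ 0

/-- `U_{m,n}`: convex hull of the rank-one tensors `x^{⊗m}`. -/
def Ucone (m n : ℕ) : Set ((Fin m → Fin n) → ℝ) :=
  convexHull ℝ {X | ∃ x : Fin n → ℝ, X = rk1 m x}

/-- The tensor `P^m A`. -/
def pmul {m n : ℕ} (P : Matrix (Fin n) (Fin n) ℝ) (A : (Fin m → Fin n) → ℝ) :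
    (Fin m → Fin n) → ℝ :=
  fun i => ∑ j : Fin m → Fin n, (∏ k, P (i k) (j k)) * A j

/-- A real-valued function on ℝⁿ is a sum of squares of polynomials. -/
def IsSOSFun {n : ℕ} (f : (Fin n → ℝ) → ℝ) : Prop :=
  ∃ (r : ℕ) (g : Fin r → MvPolynomial (Fin n) ℝ),
    ∀ x, f x = ∑ j, (MvPolynomial.eval x (g j)) ^ 2

/-- A polynomial is a sum of squares of polynomials. -/
def IsSOSPoly {n : ℕ} (f : MvPolynomial (Fin n) ℝ) : Prop :=
  ∃ (r : ℕ) (g : Fin r → MvPolynomial (Fin n) ℝ), f = ∑ j, (g j) ^ 2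

/-- A polynomial has essentially nonpositive coefficients (w.r.t. degree m):
    every coefficient except the constant term and those of `x_i^m` is ≤ 0. -/
def EssNonposCoeff {n : ℕ} (m : ℕ) (f : MvPolynomial (Fin n) ℝ) : Prop :=
  ∀ α : Fin n →₀ ℕ, α ≠ 0 → (∀ i, α ≠ Finsupp.single i m) → f.coeff α ≤ 0


def E (a b c d : ℕ) : Fin 4 →₀ ℕ := Finsupp.equivFunOnFinite.symm ![a, b, c, d]

lemma E_apply (a b c d : ℕ) (i : Fin 4) : E a b c d i = ![a, b, c, d] i := rfl

lemma E_eta (u : Fin 4 →₀ ℕ) : E (u 0) (u 1) (u 2) (u 3) = u := by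
  ext i; fin_cases i <;> simp [E_apply]

lemma E_add (a b c d a' b' c' d' : ℕ) :
    E a b c d + E a' b' c' d' = E (a + a') (b + b') (c + c') (d + d') := by
  ext i; fin_cases i <;> simp [E_apply]

lemma E_eq_iff {a b c d a' b' c' d' : ℕ} :
    E a b c d = E a' b' c' d' ↔ (a = a' ∧ b = b' ∧ c = c' ∧ d = d') := by
  constructor
  · intro h
    exact ⟨DFunLike.congr_fun h 0, DFunLike.congr_fun h 1,
      DFunLike.congr_fun h 2, DFunLike.congr_fun h 3⟩
  · rintro ⟨rfl, rfl, rfl, rfl⟩; rfl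

lemma single_eq_E_0 (n : ℕ) : Finsupp.single (0 : Fin 4) n = E n 0 0 0 := by
  ext i; fin_cases i <;> simp [E_apply, Finsupp.single_apply]

lemma single_eq_E_1 (n : ℕ) : Finsupp.single (1 : Fin 4) n = E 0 n 0 0 := by
  ext i; fin_cases i <;> simp [E_apply, Finsupp.single_apply]
lemma single_eq_E_2 (n : ℕ) : Finsupp.single (2 : Fin 4) n = E 0 0 n 0 := by
  ext i; fin_cases i <;> simp [E_apply, Finsupp.single_apply]

lemma coeff_mul_E (p q : MvPolynomial (Fin 4) ℝ) (a b c d : ℕ) :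
    coeff (E a b c d) (p * q) =
      ∑ i ∈ range (a+1), ∑ j ∈ range (b+1), ∑ k ∈ range (c+1), ∑ l ∈ range (d+1),
        coeff (E i j k l) p * coeff (E (a-i) (b-j) (c-k) (d-l)) q := by
  rw [coeff_mul]
  rw [show (∑ i ∈ range (a+1), ∑ j ∈ range (b+1), ∑ k ∈ range (c+1), ∑ l ∈ range (d+1),
        coeff (E i j k l) p * coeff (E (a-i) (b-j) (c-k) (d-l)) q)
      = ∑ y ∈ (range (a+1)) ×ˢ (range (b+1)) ×ˢ (range (c+1)) ×ˢ (range (d+1)),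
        coeff (E y.1 y.2.1 y.2.2.1 y.2.2.2) p *
          coeff (E (a-y.1) (b-y.2.1) (c-y.2.2.1) (d-y.2.2.2)) q by
    simp [Finset.sum_product]]
  refine Finset.sum_nbij' (fun x => (x.1 0, x.1 1, x.1 2, x.1 3))
    (fun y => (E y.1 y.2.1 y.2.2.1 y.2.2.2, E (a-y.1) (b-y.2.1) (c-y.2.2.1) (d-y.2.2.2)))
    ?_ ?_ ?_ ?_ ?_
  · intro x hx
    rw [Finset.HasAntidiagonal.mem_antidiagonal] at hx
    have h0 := DFunLike.congr_fun hx 0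
    have h1 := DFunLike.congr_fun hx 1
    have h2 := DFunLike.congr_fun hx 2
    have h3 := DFunLike.congr_fun hx 3
    simp [E_apply, Finsupp.add_apply] at h0 h1 h2 h3
    simp only [Finset.mem_product, Finset.mem_range]
    omega
  · intro y hy
    simp only [Finset.mem_product, Finset.mem_range] at hy
    rw [Finset.HasAntidiagonal.mem_antidiagonal, E_add, E_eq_iff]
    omega
  · intro x hx
    rw [Finset.HasAntidiagonal.mem_antidiagonal] at hx
    have h0 := DFunLike.congr_fun hx 0
    have h1 := DFunLike.congr_fun hx 1
    have h2 := DFunLike.congr_fun hx 2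
    have h3 := DFunLike.congr_fun hx 3
    simp [E_apply, Finsupp.add_apply] at h0 h1 h2 h3
    have e1 : E (x.1 0) (x.1 1) (x.1 2) (x.1 3) = x.1 := E_eta _
    have e2 : E (a - x.1 0) (b - x.1 1) (c - x.1 2) (d - x.1 3) = x.2 := by
      rw [show a - x.1 0 = x.2 0 by omega, show b - x.1 1 = x.2 1 by omega,
        show c - x.1 2 = x.2 2 by omega, show d - x.1 3 = x.2 3 by omega]
      exact E_eta _
    exact Prod.ext e1 e2
  · intro y hy
    simp [E_apply]
  · intro x hx
    rw [Finset.HasAntidiagonal.mem_antidiagonal] at hx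
    have h0 := DFunLike.congr_fun hx 0
    have h1 := DFunLike.congr_fun hx 1
    have h2 := DFunLike.congr_fun hx 2
    have h3 := DFunLike.congr_fun hx 3
    simp [E_apply, Finsupp.add_apply] at h0 h1 h2 h3
    rw [E_eta, show a - x.1 0 = x.2 0 by omega, show b - x.1 1 = x.2 1 by omega,
        show c - x.1 2 = x.2 2 by omega, show d - x.1 3 = x.2 3 by omega, E_eta]

lemma sum_sq_zero {r : ℕ} {f : Fin r → ℝ} (h : ∑ j, f j ^ 2 = 0) : ∀ j, f j = 0 := by
  intro j
  have h2 := (Finset.sum_eq_zero_iff_of_nonneg (fun i _ => sq_nonneg (f i))).mp h j (Finset.mem_univ j)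
  exact (pow_eq_zero_iff two_ne_zero).mp h2

def Mp : MvPolynomial (Fin 4) ℝ :=
  X 2 ^ 6 + X 0 ^ 2 * X 1 ^ 4 + X 0 ^ 4 * X 1 ^ 2 - C 3 * (X 0 ^ 2 * X 1 ^ 2 * X 2 ^ 2)

lemma Mp_eq : Mp = monomial (E 0 0 6 0) 1 + monomial (E 2 4 0 0) 1
    + monomial (E 4 2 0 0) 1 - monomial (E 2 2 2 0) 3 := by
  unfold Mp
  simp only [X_pow_eq_monomial, monomial_mul, C_mul_monomial,
    single_eq_E_0, single_eq_E_1, single_eq_E_2, E_add]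
  norm_num

lemma motzkin_nonneg (a b c : ℝ) :
    0 ≤ c ^ 6 + a ^ 2 * b ^ 4 + a ^ 4 * b ^ 2 - 3 * a ^ 2 * b ^ 2 * c ^ 2 := by
  rcases eq_or_ne (a ^ 2 + b ^ 2 + c ^ 2) 0 with h | h
  · have ha : a = 0 := by nlinarith [sq_nonneg a, sq_nonneg b, sq_nonneg c]
    have hb : b = 0 := by nlinarith [sq_nonneg a, sq_nonneg b, sq_nonneg c]
    have hc : c = 0 := by nlinarith [sq_nonneg a, sq_nonneg b, sq_nonneg c]
    simp [ha, hb, hc]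
  · have hpos : 0 < a ^ 2 + b ^ 2 + c ^ 2 :=
      lt_of_le_of_ne (by positivity) (Ne.symm h)
    have key : 0 ≤ (a ^ 2 + b ^ 2 + c ^ 2) *
        (c ^ 6 + a ^ 2 * b ^ 4 + a ^ 4 * b ^ 2 - 3 * a ^ 2 * b ^ 2 * c ^ 2) := by
      nlinarith [sq_nonneg (a^2*b*c - b*c^3), sq_nonneg (a*b^2*c - a*c^3),
        sq_nonneg (a^2*b^2 - c^4), sq_nonneg (a*b^3 - a^3*b),
        sq_nonneg (a*b^3 + a^3*b - 2*a*b*c^2)]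
    nlinarith [key, hpos]

lemma motzkin_not_sos :
    ¬ ∃ (r : ℕ) (g : Fin r → MvPolynomial (Fin 4) ℝ), Mp = ∑ j, g j ^ 2 := by
  rintro ⟨r, g, hMp⟩
  have hMp' : Mp = ∑ j, g j * g j := by simpa [sq] using hMp
  have Z000 : ∀ j, coeff (E 0 0 0 0) (g j) = 0 := by
    apply sum_sq_zero
    have h : coeff (E 0 0 0 0) Mp = ∑ j, coeff (E 0 0 0 0) (g j * g j) := by
      rw [hMp', coeff_sum]
    rw [show (∑ j, coeff (E 0 0 0 0) (g j * g j)) = ∑ j, coeff (E 0 0 0 0) (g j) ^ 2 from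
      Finset.sum_congr rfl fun j _ => by
        rw [coeff_mul_E]
        simp only [Finset.sum_range_succ, Finset.sum_range_zero]
        norm_num
        ring] at h
    rw [Mp_eq] at h
    norm_num [coeff_monomial, E_eq_iff] at h
    linarith [h]
  have Z100 : ∀ j, coeff (E 1 0 0 0) (g j) = 0 := by
    apply sum_sq_zero
    have h : coeff (E 2 0 0 0) Mp = ∑ j, coeff (E 2 0 0 0) (g j * g j) := by
      rw [hMp', coeff_sum]
    rw [show (∑ j, coeff (E 2 0 0 0) (g j * g j)) = ∑ j, coeff (E 1 0 0 0) (g j) ^ 2 from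
      Finset.sum_congr rfl fun j _ => by
        rw [coeff_mul_E]
        simp only [Finset.sum_range_succ, Finset.sum_range_zero]
        norm_num
        simp only [Z000 j, mul_zero, zero_mul, add_zero, zero_add]
        ring] at h
    rw [Mp_eq] at h
    norm_num [coeff_monomial, E_eq_iff] at h
    linarith [h]
  have Z010 : ∀ j, coeff (E 0 1 0 0) (g j) = 0 := by
    apply sum_sq_zero
    have h : coeff (E 0 2 0 0) Mp = ∑ j, coeff (E 0 2 0 0) (g j * g j) := by
      rw [hMp', coeff_sum]
    rw [show (∑ j, coeff (E 0 2 0 0) (g j * g j)) = ∑ j, coeff (E 0 1 0 0) (g j) ^ 2 from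
      Finset.sum_congr rfl fun j _ => by
        rw [coeff_mul_E]
        simp only [Finset.sum_range_succ, Finset.sum_range_zero]
        norm_num
        simp only [Z000 j, Z100 j, mul_zero, zero_mul, add_zero, zero_add]
        ring] at h
    rw [Mp_eq] at h
    norm_num [coeff_monomial, E_eq_iff] at h
    linarith [h]
  have Z001 : ∀ j, coeff (E 0 0 1 0) (g j) = 0 := by
    apply sum_sq_zero
    have h : coeff (E 0 0 2 0) Mp = ∑ j, coeff (E 0 0 2 0) (g j * g j) := by
      rw [hMp', coeff_sum]
    rw [show (∑ j, coeff (E 0 0 2 0) (g j * g j)) = ∑ j, coeff (E 0 0 1 0) (g j) ^ 2 from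
      Finset.sum_congr rfl fun j _ => by
        rw [coeff_mul_E]
        simp only [Finset.sum_range_succ, Finset.sum_range_zero]
        norm_num
        simp only [Z000 j, Z100 j, Z010 j, mul_zero, zero_mul, add_zero, zero_add]
        ring] at h
    rw [Mp_eq] at h
    norm_num [coeff_monomial, E_eq_iff] at h
    linarith [h]
  have Z200 : ∀ j, coeff (E 2 0 0 0) (g j) = 0 := by
    apply sum_sq_zero
    have h : coeff (E 4 0 0 0) Mp = ∑ j, coeff (E 4 0 0 0) (g j * g j) := by
      rw [hMp', coeff_sum]
    rw [show (∑ j, coeff (E 4 0 0 0) (g j * g j)) = ∑ j, coeff (E 2 0 0 0) (g j) ^ 2 from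
      Finset.sum_congr rfl fun j _ => by
        rw [coeff_mul_E]
        simp only [Finset.sum_range_succ, Finset.sum_range_zero]
        norm_num
        simp only [Z000 j, Z100 j, Z010 j, Z001 j, mul_zero, zero_mul, add_zero, zero_add]
        ring] at h
    rw [Mp_eq] at h
    norm_num [coeff_monomial, E_eq_iff] at h
    linarith [h]
  have Z020 : ∀ j, coeff (E 0 2 0 0) (g j) = 0 := by
    apply sum_sq_zero
    have h : coeff (E 0 4 0 0) Mp = ∑ j, coeff (E 0 4 0 0) (g j * g j) := by
      rw [hMp', coeff_sum]
    rw [show (∑ j, coeff (E 0 4 0 0) (g j * g j)) = ∑ j, coeff (E 0 2 0 0) (g j) ^ 2 from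
      Finset.sum_congr rfl fun j _ => by
        rw [coeff_mul_E]
        simp only [Finset.sum_range_succ, Finset.sum_range_zero]
        norm_num
        simp only [Z000 j, Z100 j, Z010 j, Z001 j, Z200 j, mul_zero, zero_mul, add_zero, zero_add]
        ring] at h
    rw [Mp_eq] at h
    norm_num [coeff_monomial, E_eq_iff] at h
    linarith [h]
  have Z002 : ∀ j, coeff (E 0 0 2 0) (g j) = 0 := by
    apply sum_sq_zero
    have h : coeff (E 0 0 4 0) Mp = ∑ j, coeff (E 0 0 4 0) (g j * g j) := by
      rw [hMp', coeff_sum]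
    rw [show (∑ j, coeff (E 0 0 4 0) (g j * g j)) = ∑ j, coeff (E 0 0 2 0) (g j) ^ 2 from
      Finset.sum_congr rfl fun j _ => by
        rw [coeff_mul_E]
        simp only [Finset.sum_range_succ, Finset.sum_range_zero]
        norm_num
        simp only [Z000 j, Z100 j, Z010 j, Z001 j, Z200 j, Z020 j, mul_zero, zero_mul, add_zero, zero_add]
        ring] at h
    rw [Mp_eq] at h
    norm_num [coeff_monomial, E_eq_iff] at h
    linarith [h]
  have Z110 : ∀ j, coeff (E 1 1 0 0) (g j) = 0 := by
    apply sum_sq_zero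
    have h : coeff (E 2 2 0 0) Mp = ∑ j, coeff (E 2 2 0 0) (g j * g j) := by
      rw [hMp', coeff_sum]
    rw [show (∑ j, coeff (E 2 2 0 0) (g j * g j)) = ∑ j, coeff (E 1 1 0 0) (g j) ^ 2 from
      Finset.sum_congr rfl fun j _ => by
        rw [coeff_mul_E]
        simp only [Finset.sum_range_succ, Finset.sum_range_zero]
        norm_num
        simp only [Z000 j, Z100 j, Z010 j, Z001 j, Z200 j, Z020 j, Z002 j, mul_zero, zero_mul, add_zero, zero_add]
        ring] at h
    rw [Mp_eq] at h
    norm_num [coeff_monomial, E_eq_iff] at h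
    linarith [h]
  have Z101 : ∀ j, coeff (E 1 0 1 0) (g j) = 0 := by
    apply sum_sq_zero
    have h : coeff (E 2 0 2 0) Mp = ∑ j, coeff (E 2 0 2 0) (g j * g j) := by
      rw [hMp', coeff_sum]
    rw [show (∑ j, coeff (E 2 0 2 0) (g j * g j)) = ∑ j, coeff (E 1 0 1 0) (g j) ^ 2 from
      Finset.sum_congr rfl fun j _ => by
        rw [coeff_mul_E]
        simp only [Finset.sum_range_succ, Finset.sum_range_zero]
        norm_num
        simp only [Z000 j, Z100 j, Z010 j, Z001 j, Z200 j, Z020 j, Z002 j, Z110 j, mul_zero, zero_mul, add_zero, zero_add]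
        ring] at h
    rw [Mp_eq] at h
    norm_num [coeff_monomial, E_eq_iff] at h
    linarith [h]
  have Z011 : ∀ j, coeff (E 0 1 1 0) (g j) = 0 := by
    apply sum_sq_zero
    have h : coeff (E 0 2 2 0) Mp = ∑ j, coeff (E 0 2 2 0) (g j * g j) := by
      rw [hMp', coeff_sum]
    rw [show (∑ j, coeff (E 0 2 2 0) (g j * g j)) = ∑ j, coeff (E 0 1 1 0) (g j) ^ 2 from
      Finset.sum_congr rfl fun j _ => by
        rw [coeff_mul_E]
        simp only [Finset.sum_range_succ, Finset.sum_range_zero]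
        norm_num
        simp only [Z000 j, Z100 j, Z010 j, Z001 j, Z200 j, Z020 j, Z002 j, Z110 j, Z101 j, mul_zero, zero_mul, add_zero, zero_add]
        ring] at h
    rw [Mp_eq] at h
    norm_num [coeff_monomial, E_eq_iff] at h
    linarith [h]
  have Z300 : ∀ j, coeff (E 3 0 0 0) (g j) = 0 := by
    apply sum_sq_zero
    have h : coeff (E 6 0 0 0) Mp = ∑ j, coeff (E 6 0 0 0) (g j * g j) := by
      rw [hMp', coeff_sum]
    rw [show (∑ j, coeff (E 6 0 0 0) (g j * g j)) = ∑ j, coeff (E 3 0 0 0) (g j) ^ 2 from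
      Finset.sum_congr rfl fun j _ => by
        rw [coeff_mul_E]
        simp only [Finset.sum_range_succ, Finset.sum_range_zero]
        norm_num
        simp only [Z000 j, Z100 j, Z010 j, Z001 j, Z200 j, Z020 j, Z002 j, Z110 j, Z101 j, Z011 j, mul_zero, zero_mul, add_zero, zero_add]
        ring] at h
    rw [Mp_eq] at h
    norm_num [coeff_monomial, E_eq_iff] at h
    linarith [h]
  have Z030 : ∀ j, coeff (E 0 3 0 0) (g j) = 0 := by
    apply sum_sq_zero
    have h : coeff (E 0 6 0 0) Mp = ∑ j, coeff (E 0 6 0 0) (g j * g j) := by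
      rw [hMp', coeff_sum]
    rw [show (∑ j, coeff (E 0 6 0 0) (g j * g j)) = ∑ j, coeff (E 0 3 0 0) (g j) ^ 2 from
      Finset.sum_congr rfl fun j _ => by
        rw [coeff_mul_E]
        simp only [Finset.sum_range_succ, Finset.sum_range_zero]
        norm_num
        simp only [Z000 j, Z100 j, Z010 j, Z001 j, Z200 j, Z020 j, Z002 j, Z110 j, Z101 j, Z011 j, Z300 j, mul_zero, zero_mul, add_zero, zero_add]
        ring] at h
    rw [Mp_eq] at h
    norm_num [coeff_monomial, E_eq_iff] at h
    linarith [h]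
  have Z201 : ∀ j, coeff (E 2 0 1 0) (g j) = 0 := by
    apply sum_sq_zero
    have h : coeff (E 4 0 2 0) Mp = ∑ j, coeff (E 4 0 2 0) (g j * g j) := by
      rw [hMp', coeff_sum]
    rw [show (∑ j, coeff (E 4 0 2 0) (g j * g j)) = ∑ j, coeff (E 2 0 1 0) (g j) ^ 2 from
      Finset.sum_congr rfl fun j _ => by
        rw [coeff_mul_E]
        simp only [Finset.sum_range_succ, Finset.sum_range_zero]
        norm_num
        simp only [Z000 j, Z100 j, Z010 j, Z001 j, Z200 j, Z020 j, Z002 j, Z110 j, Z101 j, Z011 j, Z300 j, Z030 j, mul_zero, zero_mul, add_zero, zero_add]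
        ring] at h
    rw [Mp_eq] at h
    norm_num [coeff_monomial, E_eq_iff] at h
    linarith [h]
  have Z021 : ∀ j, coeff (E 0 2 1 0) (g j) = 0 := by
    apply sum_sq_zero
    have h : coeff (E 0 4 2 0) Mp = ∑ j, coeff (E 0 4 2 0) (g j * g j) := by
      rw [hMp', coeff_sum]
    rw [show (∑ j, coeff (E 0 4 2 0) (g j * g j)) = ∑ j, coeff (E 0 2 1 0) (g j) ^ 2 from
      Finset.sum_congr rfl fun j _ => by
        rw [coeff_mul_E]
        simp only [Finset.sum_range_succ, Finset.sum_range_zero]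
        norm_num
        simp only [Z000 j, Z100 j, Z010 j, Z001 j, Z200 j, Z020 j, Z002 j, Z110 j, Z101 j, Z011 j, Z300 j, Z030 j, Z201 j, mul_zero, zero_mul, add_zero, zero_add]
        ring] at h
    rw [Mp_eq] at h
    norm_num [coeff_monomial, E_eq_iff] at h
    linarith [h]
  have Z102 : ∀ j, coeff (E 1 0 2 0) (g j) = 0 := by
    apply sum_sq_zero
    have h : coeff (E 2 0 4 0) Mp = ∑ j, coeff (E 2 0 4 0) (g j * g j) := by
      rw [hMp', coeff_sum]
    rw [show (∑ j, coeff (E 2 0 4 0) (g j * g j)) = ∑ j, coeff (E 1 0 2 0) (g j) ^ 2 from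
      Finset.sum_congr rfl fun j _ => by
        rw [coeff_mul_E]
        simp only [Finset.sum_range_succ, Finset.sum_range_zero]
        norm_num
        simp only [Z000 j, Z100 j, Z010 j, Z001 j, Z200 j, Z020 j, Z002 j, Z110 j, Z101 j, Z011 j, Z300 j, Z030 j, Z201 j, Z021 j, mul_zero, zero_mul, add_zero, zero_add]
        ring] at h
    rw [Mp_eq] at h
    norm_num [coeff_monomial, E_eq_iff] at h
    linarith [h]
  have Z012 : ∀ j, coeff (E 0 1 2 0) (g j) = 0 := by
    apply sum_sq_zero
    have h : coeff (E 0 2 4 0) Mp = ∑ j, coeff (E 0 2 4 0) (g j * g j) := by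
      rw [hMp', coeff_sum]
    rw [show (∑ j, coeff (E 0 2 4 0) (g j * g j)) = ∑ j, coeff (E 0 1 2 0) (g j) ^ 2 from
      Finset.sum_congr rfl fun j _ => by
        rw [coeff_mul_E]
        simp only [Finset.sum_range_succ, Finset.sum_range_zero]
        norm_num
        simp only [Z000 j, Z100 j, Z010 j, Z001 j, Z200 j, Z020 j, Z002 j, Z110 j, Z101 j, Z011 j, Z300 j, Z030 j, Z201 j, Z021 j, Z102 j, mul_zero, zero_mul, add_zero, zero_add]
        ring] at h
    rw [Mp_eq] at h
    norm_num [coeff_monomial, E_eq_iff] at h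
    linarith [h]
  have hfin : coeff (E 2 2 2 0) Mp = ∑ j, coeff (E 2 2 2 0) (g j * g j) := by
    rw [hMp', coeff_sum]
  rw [show (∑ j, coeff (E 2 2 2 0) (g j * g j)) = ∑ j, coeff (E 1 1 1 0) (g j) ^ 2 from
    Finset.sum_congr rfl fun j _ => by
      rw [coeff_mul_E]
      simp only [Finset.sum_range_succ, Finset.sum_range_zero]
      norm_num
      simp only [Z000 j, Z100 j, Z010 j, Z001 j, Z200 j, Z020 j, Z002 j, Z110 j, Z101 j, Z011 j, Z300 j, Z030 j, Z201 j, Z021 j, Z102 j, Z012 j, mul_zero, zero_mul, add_zero, zero_add]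
      ring] at hfin
  rw [Mp_eq] at hfin
  norm_num [coeff_monomial, E_eq_iff] at hfin
  have hnn : (0:ℝ) ≤ ∑ j, coeff (E 1 1 1 0) (g j) ^ 2 :=
    Finset.sum_nonneg fun j _ => sq_nonneg _
  linarith

/-- Both alternatives of the tensor Yuan theorem can fail without the sign
structure assumption (Motzkin-based example). -/
theorem stmt12 :
    (¬ ∃ x : Fin 4 → ℝ,
        ((x 2) ^ 6 + (x 0) ^ 2 * (x 1) ^ 4 + (x 0) ^ 4 * (x 1) ^ 2
            - 3 * (x 0) ^ 2 * (x 1) ^ 2 * (x 2) ^ 2 < 0) ∧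
        ((x 0) ^ 6 + (x 1) ^ 6 + (x 2) ^ 6 - (x 3) ^ 6 < 0)) ∧
    ¬ ∃ l0 l1 : ℝ, 0 ≤ l0 ∧ 0 ≤ l1 ∧ l0 + l1 = 1 ∧
        IsSOSFun (fun x : Fin 4 → ℝ =>
          l0 * ((x 2) ^ 6 + (x 0) ^ 2 * (x 1) ^ 4 + (x 0) ^ 4 * (x 1) ^ 2
              - 3 * (x 0) ^ 2 * (x 1) ^ 2 * (x 2) ^ 2) +
          l1 * ((x 0) ^ 6 + (x 1) ^ 6 + (x 2) ^ 6 - (x 3) ^ 6)) := by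
  constructor
  · rintro ⟨x, h0, h1⟩
    exact absurd h0 (not_lt.mpr (motzkin_nonneg (x 0) (x 1) (x 2)))
  · rintro ⟨l0, l1, hl0, hl1, hsum, r, g, hg⟩
    have hl1z : l1 = 0 := by
      by_contra hne
      have hl1pos : 0 < l1 := lt_of_le_of_ne hl1 (Ne.symm hne)
      have h := hg ![0, 0, 0, 1]
      norm_num at h
      rw [show (![0, 0, 0, 1] : Fin 4 → ℝ) 2 = 0 from rfl,
        show (![0, 0, 0, 1] : Fin 4 → ℝ) 3 = 1 from rfl] at h
      have hnn : (0:ℝ) ≤ ∑ j, eval ![(0:ℝ), 0, 0, 1] (g j) ^ 2 :=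
        Finset.sum_nonneg fun j _ => sq_nonneg _
      linarith
    have hl0o : l0 = 1 := by linarith
    subst hl1z hl0o
    refine motzkin_not_sos ⟨r, g, MvPolynomial.funext fun x => ?_⟩
    have h := hg x
    simp only [one_mul, zero_mul, add_zero] at h
    simp only [Mp, map_sum, map_sub, map_add, map_mul, map_pow, eval_X, eval_C]
    linarith [h]
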